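/- arXiv:2204.13328 — 2 statements merged into one kernel-verified Lean document; each statement's English description precedes it below -/
import Mathlib

section
/- For p ∈ [1,∞) and u ∈ L^p(ℝ^N), defining E_t = {(x,y) ∈ ℝ^{2N} : x ≠ y, |u(x)-u(y)|^p ≥ t^p·|x-y|^N}, one has lim_{t→0⁺} t^p·|E_t|_{2N} = 2ω_N·∫_{ℝ^N} |u(x)|^p dx. -/
open MeasureTheory Metric Set Filter
open scoped ENNReal NNReal Topology

namespace GY
variable {N : ℕ} {p : ℝ}

lemma vol_slab (hN : 0 < N) {s c : ℝ} (hs : 0 < s) (hc : 0 ≤ c) (x : EuclideanSpace ℝ (Fin N)) :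
    ENNReal.ofReal s * volume {y : EuclideanSpace ℝ (Fin N) | s * dist x y ^ N ≤ c}
      = ENNReal.ofReal c * volume (ball (0 : EuclideanSpace ℝ (Fin N)) 1) := by
  set r : ℝ := (c / s) ^ (N : ℝ)⁻¹ with hr_def
  have hcs : 0 ≤ c / s := div_nonneg hc hs.le
  have hr : 0 ≤ r := Real.rpow_nonneg hcs _
  have hrN : r ^ N = c / s := by
    rw [hr_def, ← Real.rpow_natCast ((c / s) ^ (N : ℝ)⁻¹) N, ← Real.rpow_mul hcs,
      inv_mul_cancel₀ (Nat.cast_ne_zero.2 hN.ne'), Real.rpow_one]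
  have hset : {y : EuclideanSpace ℝ (Fin N) | s * dist x y ^ N ≤ c} = closedBall x r := by
    ext y
    simp only [mem_setOf_eq, mem_closedBall, dist_comm y x]
    rw [← le_div_iff₀' hs, ← hrN]
    exact pow_le_pow_iff_left₀ (dist_nonneg (x := x) (y := y)) hr hN.ne'
  rw [hset, Measure.addHaar_closedBall volume x hr, finrank_euclideanSpace_fin, hrN,
    ← mul_assoc, ← ENNReal.ofReal_mul hs.le, mul_div_cancel₀ c hs.ne']

lemma vol_singleton (hN : 0 < N) (x : EuclideanSpace ℝ (Fin N)) :
    volume ({x} : Set (EuclideanSpace ℝ (Fin N))) = 0 := by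
  rw [← closedBall_zero, Measure.addHaar_closedBall volume x le_rfl,
    finrank_euclideanSpace_fin, zero_pow hN.ne', ENNReal.ofReal_zero, zero_mul]

lemma markov {p : ℝ} (hp : 0 < p) {u : EuclideanSpace ℝ (Fin N) → ℝ}
    (hu : Measurable u) (hfin : ∫⁻ x, ENNReal.ofReal (|u x| ^ p) < ⊤)
    {c : ℝ} (hc : 0 < c) : volume {y : EuclideanSpace ℝ (Fin N) | c ≤ |u y|} < ⊤ := by
  have hw : Measurable fun x => ENNReal.ofReal (|u x| ^ p) :=
    ((Real.continuous_rpow_const hp.le).measurable.comp hu.abs).ennreal_ofReal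
  have hsub : {y : EuclideanSpace ℝ (Fin N) | c ≤ |u y|}
      ⊆ {y | ENNReal.ofReal (c ^ p) ≤ ENNReal.ofReal (|u y| ^ p)} := by
    intro y hy
    exact ENNReal.ofReal_le_ofReal (Real.rpow_le_rpow hc.le hy hp.le)
  have h1 := mul_meas_ge_le_lintegral₀ (μ := volume) hw.aemeasurable (ENNReal.ofReal (c ^ p))
  have h2 : volume {y | ENNReal.ofReal (c ^ p) ≤ ENNReal.ofReal (|u y| ^ p)} < ⊤ := by
    by_contra h
    push_neg at h
    rw [top_le_iff] at h
    rw [h, ENNReal.mul_top (by positivity : ENNReal.ofReal (c ^ p) ≠ 0)] at h1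
    exact absurd (top_le_iff.1 h1) hfin.ne
  exact lt_of_le_of_lt (measure_mono hsub) h2


lemma aux_liminf {α : Type*} {l : Filter α} {f g : α → ℝ≥0∞} {a : ℝ≥0∞}
    (h : ∀ᶠ s in l, a ≤ f s + g s) (hg : Tendsto g l (𝓝 0)) : a ≤ liminf f l := by
  refine ENNReal.le_of_forall_pos_le_add fun δ hδ _ => ?_
  have hδ' : (0 : ℝ≥0∞) < δ := by exact_mod_cast hδ
  have hev : ∀ᶠ s in l, g s < δ := hg.eventually (gt_mem_nhds hδ')
  have h1 : a - δ ≤ liminf f l := by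
    refine le_liminf_of_le (by isBoundedDefault) ?_
    filter_upwards [h, hev] with s hs hsg
    exact tsub_le_iff_right.2 (hs.trans (add_le_add_right hsg.le _))
  rcases le_total a δ with hle | hle
  · exact hle.trans le_add_self
  · calc a = a - δ + δ := (tsub_add_cancel_of_le hle).symm
      _ ≤ liminf f l + δ := add_le_add_left h1 _

lemma aux_limsup {α : Type*} {l : Filter α} [l.NeBot] {f g : α → ℝ≥0∞} {C : ℝ≥0∞}
    (h : ∀ᶠ s in l, f s ≤ C + g s) (hg : Tendsto g l (𝓝 0)) : limsup f l ≤ C := by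
  calc limsup f l ≤ limsup (fun s => C + g s) l := limsup_le_limsup h
    _ = C := by
        have : Tendsto (fun s => C + g s) l (𝓝 (C + 0)) := hg.const_add C
        rw [add_zero] at this
        exact this.limsup_eq


noncomputable def GG (N : ℕ) (p : ℝ) (u : EuclideanSpace ℝ (Fin N) → ℝ) : ℝ → ℝ≥0∞ :=
  fun s => ENNReal.ofReal s *
    volume {q : EuclideanSpace ℝ (Fin N) × EuclideanSpace ℝ (Fin N) |
      q.1 ≠ q.2 ∧ s * dist q.1 q.2 ^ N ≤ |u q.1 - u q.2| ^ p}

lemma lower_step (hN : 0 < N) (hp : 0 < p) {u : EuclideanSpace ℝ (Fin N) → ℝ}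
    (hu : Measurable u) (hfin : ∫⁻ x, ENNReal.ofReal (|u x| ^ p) < ⊤)
    {ε c : ℝ} (hε0 : 0 < ε) (hε1 : ε < 1) (hc : 0 < c) :
    2 * ENNReal.ofReal ((1 - ε) ^ p) * volume (ball (0 : EuclideanSpace ℝ (Fin N)) 1) *
      (∫⁻ x in {x | c ≤ |u x|}, ENNReal.ofReal (|u x| ^ p)) ≤
      liminf (GG N p u) (𝓝[>] (0:ℝ)) := by
  have h1ε : (0:ℝ) ≤ 1 - ε := by linarith
  set v : EuclideanSpace ℝ (Fin N) → ℝ := fun x => |u x| with hv_def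
  have hv : Measurable v := hu.abs
  have hvp : Measurable fun x => v x ^ p := (Real.continuous_rpow_const hp.le).measurable.comp hv
  have hw : Measurable fun x => ENNReal.ofReal (v x ^ p) := hvp.ennreal_ofReal
  set ω := volume (ball (0 : EuclideanSpace ℝ (Fin N)) 1) with hω_def
  set Gc : Set (EuclideanSpace ℝ (Fin N)) := {x | c ≤ v x} with hGc_def
  have hGc : MeasurableSet Gc := measurableSet_le measurable_const hv
  set V := volume Gc with hV_def
  have hV : V < ⊤ := markov hp hu hfin hc
  set K := volume {y : EuclideanSpace ℝ (Fin N) | ε * c ≤ v y} with hK_def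
  have hK : K < ⊤ := markov hp hu hfin (mul_pos hε0 hc)
  set Jc := ∫⁻ x in Gc, ENNReal.ofReal (v x ^ p) with hJc_def
  -- the good sets
  set P : ℝ → Set (EuclideanSpace ℝ (Fin N) × EuclideanSpace ℝ (Fin N)) := fun s =>
    {q | q.1 ≠ q.2 ∧ v q.2 ≤ ε * v q.1 ∧ s * dist q.1 q.2 ^ N ≤ (1 - ε) ^ p * v q.1 ^ p ∧
      0 < v q.1} with hP_def
  have hPmeas : ∀ s, MeasurableSet (P s) := by
    intro s
    refine MeasurableSet.inter ?_ (MeasurableSet.inter ?_ (MeasurableSet.inter ?_ ?_))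
    · exact (isClosed_eq continuous_fst continuous_snd).measurableSet.compl
    · exact measurableSet_le (hv.comp measurable_snd) ((hv.comp measurable_fst).const_mul ε)
    · exact measurableSet_le ((measurable_dist.pow_const N).const_mul s)
        ((hvp.comp measurable_fst).const_mul _)
    · exact measurableSet_lt measurable_const (hv.comp measurable_fst)
  have hsec : ∀ s, Measurable fun x => volume (Prod.mk x ⁻¹' P s) := fun s =>
    measurable_measure_prodMk_left (hPmeas s)
  -- P s is included in the level set
  have hPE : ∀ s : ℝ, P s ⊆ {q : EuclideanSpace ℝ (Fin N) × EuclideanSpace ℝ (Fin N) | q.1 ≠ q.2 ∧ s * dist q.1 q.2 ^ N ≤ |u q.1 - u q.2| ^ p} := by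
    rintro s q ⟨hne, h2, h3, h4⟩
    refine ⟨hne, h3.trans ?_⟩
    have h5 : (1 - ε) * v q.1 ≤ |u q.1 - u q.2| := by
      have := abs_sub_abs_le_abs_sub (u q.1) (u q.2)
      simp only [hv_def] at h2 ⊢
      linarith
    calc (1 - ε) ^ p * v q.1 ^ p = ((1 - ε) * v q.1) ^ p :=
          (Real.mul_rpow h1ε (abs_nonneg _)).symm
      _ ≤ |u q.1 - u q.2| ^ p :=
          Real.rpow_le_rpow (mul_nonneg h1ε (abs_nonneg _)) h5 hp.le
  have hQE : ∀ s : ℝ, Prod.swap ⁻¹' P s ⊆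
      {q : EuclideanSpace ℝ (Fin N) × EuclideanSpace ℝ (Fin N) | q.1 ≠ q.2 ∧ s * dist q.1 q.2 ^ N ≤ |u q.1 - u q.2| ^ p} := by
    rintro s q ⟨hne, h2, h3, h4⟩
    simp only [Prod.fst_swap, Prod.snd_swap] at hne h2 h3 h4
    refine ⟨Ne.symm hne, ?_⟩
    rw [dist_comm] at h3
    refine h3.trans ?_
    have h5 : (1 - ε) * v q.2 ≤ |u q.1 - u q.2| := by
      have := abs_sub_abs_le_abs_sub (u q.2) (u q.1)
      rw [abs_sub_comm (u q.2) (u q.1)] at this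
      simp only [hv_def] at h2 ⊢
      linarith
    calc (1 - ε) ^ p * v q.2 ^ p = ((1 - ε) * v q.2) ^ p :=
          (Real.mul_rpow h1ε (abs_nonneg _)).symm
      _ ≤ |u q.1 - u q.2| ^ p :=
          Real.rpow_le_rpow (mul_nonneg h1ε (abs_nonneg _)) h5 hp.le
  have hdisj : ∀ s : ℝ, Disjoint (P s) (Prod.swap ⁻¹' P s) := by
    intro s
    rw [disjoint_left]
    rintro q ⟨_, h2, _, h4⟩ ⟨_, h2', _, h4'⟩
    simp only [Prod.fst_swap, Prod.snd_swap] at h2' h4'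
    nlinarith
  -- key pointwise estimate
  have key : ∀ s : ℝ, 0 < s → ∀ x ∈ Gc,
      ENNReal.ofReal ((1 - ε) ^ p * v x ^ p) * ω ≤
        ENNReal.ofReal s * volume (Prod.mk x ⁻¹' P s) + ENNReal.ofReal s * K := by
    intro s hs x hx
    have hx' : 0 < v x := lt_of_lt_of_le hc hx
    have hcc : (0:ℝ) ≤ (1 - ε) ^ p * v x ^ p :=
      mul_nonneg (Real.rpow_nonneg h1ε p) (Real.rpow_nonneg (abs_nonneg _) p)
    have hsub : {y : EuclideanSpace ℝ (Fin N) | s * dist x y ^ N ≤ (1 - ε) ^ p * v x ^ p} ⊆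
        (Prod.mk x ⁻¹' P s) ∪ ({x} ∪ {y : EuclideanSpace ℝ (Fin N) | ε * c ≤ v y}) := by
      intro y hy
      by_cases hxy : x = y
      · exact Or.inr (Or.inl (by simp [hxy.symm]))
      by_cases hvy : v y ≤ ε * v x
      · exact Or.inl ⟨hxy, hvy, hy, hx'⟩
      · push_neg at hvy
        refine Or.inr (Or.inr ?_)
        have : ε * c ≤ ε * v x := mul_le_mul_of_nonneg_left hx hε0.le
        exact le_of_lt (lt_of_le_of_lt this hvy)
    calc ENNReal.ofReal ((1 - ε) ^ p * v x ^ p) * ω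
        = ENNReal.ofReal s * volume {y : EuclideanSpace ℝ (Fin N) | s * dist x y ^ N ≤ (1 - ε) ^ p * v x ^ p} :=
          (vol_slab hN hs hcc x).symm
      _ ≤ ENNReal.ofReal s *
            (volume (Prod.mk x ⁻¹' P s) + volume ({x} ∪ {y : EuclideanSpace ℝ (Fin N) | ε * c ≤ v y})) :=
          mul_le_mul_right ((measure_mono hsub).trans (measure_union_le _ _)) _
      _ ≤ ENNReal.ofReal s * (volume (Prod.mk x ⁻¹' P s) + (0 + K)) := by
          refine mul_le_mul_right (add_le_add_right ?_ _) _
          refine (measure_union_le _ _).trans ?_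
          rw [vol_singleton hN x]
      _ = ENNReal.ofReal s * volume (Prod.mk x ⁻¹' P s) + ENNReal.ofReal s * K := by
          rw [zero_add, mul_add]
  -- integrated estimate
  have key2 : ∀ s : ℝ, 0 < s →
      ENNReal.ofReal ((1 - ε) ^ p) * ω * Jc ≤
        ENNReal.ofReal s * volume (P s) + ENNReal.ofReal s * (K * V) := by
    intro s hs
    have step1 : ENNReal.ofReal ((1 - ε) ^ p) * ω * Jc =
        ∫⁻ x in Gc, ENNReal.ofReal ((1 - ε) ^ p * v x ^ p) * ω := by
      have : ∀ x : EuclideanSpace ℝ (Fin N), ENNReal.ofReal ((1 - ε) ^ p * v x ^ p) * ω =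
          (ENNReal.ofReal ((1 - ε) ^ p) * ω) * ENNReal.ofReal (v x ^ p) := by
        intro x
        rw [ENNReal.ofReal_mul (Real.rpow_nonneg h1ε p)]
        ring
      rw [lintegral_congr this, lintegral_const_mul _ hw, hJc_def, mul_assoc]
    rw [step1]
    have step2 : (∫⁻ x in Gc, ENNReal.ofReal ((1 - ε) ^ p * v x ^ p) * ω) ≤
        ∫⁻ x in Gc, (ENNReal.ofReal s * volume (Prod.mk x ⁻¹' P s) + ENNReal.ofReal s * K) := by
      refine setLIntegral_mono (((hsec s).const_mul _).add_const _) ?_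
      exact fun x hx => key s hs x hx
    refine step2.trans ?_
    have step3 : (∫⁻ x in Gc, (ENNReal.ofReal s * volume (Prod.mk x ⁻¹' P s) +
        ENNReal.ofReal s * K)) =
        ENNReal.ofReal s * (∫⁻ x in Gc, volume (Prod.mk x ⁻¹' P s)) + ENNReal.ofReal s * K * V := by
      rw [lintegral_add_right _ measurable_const, lintegral_const_mul _ (hsec s),
        setLIntegral_const, hV_def, mul_assoc]
    rw [step3]
    refine add_le_add ?_ (le_of_eq (by rw [mul_assoc]))
    refine mul_le_mul_right ?_ _
    calc (∫⁻ x in Gc, volume (Prod.mk x ⁻¹' P s)) ≤ ∫⁻ x, volume (Prod.mk x ⁻¹' P s) :=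
          setLIntegral_le_lintegral _ _
      _ = volume (P s) := (Measure.prod_apply (hPmeas s)).symm
  -- conclude
  refine aux_liminf (f := GG N p u) (g := fun s => ENNReal.ofReal s * (2 * (K * V))) ?_ ?_
  · filter_upwards [self_mem_nhdsWithin] with s hs
    have hs : (0:ℝ) < s := hs
    have hQP : volume (Prod.swap ⁻¹' P s) = volume (P s) := by
      rw [Measure.volume_eq_prod]
      exact Measure.measurePreserving_swap.measure_preimage
        ((hPmeas s).nullMeasurableSet)
    have hunion : volume (P s) + volume (Prod.swap ⁻¹' P s) ≤
        volume {q : EuclideanSpace ℝ (Fin N) × EuclideanSpace ℝ (Fin N) | q.1 ≠ q.2 ∧ s * dist q.1 q.2 ^ N ≤ |u q.1 - u q.2| ^ p} := by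
      rw [← measure_union (hdisj s) ((hPmeas s).preimage measurable_swap)]
      exact measure_mono (union_subset (hPE s) (hQE s))
    have h2 := key2 s hs
    calc 2 * ENNReal.ofReal ((1 - ε) ^ p) * ω * Jc
        = 2 * (ENNReal.ofReal ((1 - ε) ^ p) * ω * Jc) := by ring
      _ ≤ 2 * (ENNReal.ofReal s * volume (P s) + ENNReal.ofReal s * (K * V)) :=
          mul_le_mul_right h2 2
      _ = ENNReal.ofReal s * (volume (P s) + volume (P s)) +
            ENNReal.ofReal s * (2 * (K * V)) := by ring
      _ ≤ ENNReal.ofReal s *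
            volume {q : EuclideanSpace ℝ (Fin N) × EuclideanSpace ℝ (Fin N) | q.1 ≠ q.2 ∧ s * dist q.1 q.2 ^ N ≤ |u q.1 - u q.2| ^ p} +
            ENNReal.ofReal s * (2 * (K * V)) := by
          refine add_le_add_left (mul_le_mul_right ?_ _) _
          calc volume (P s) + volume (P s)
              = volume (P s) + volume (Prod.swap ⁻¹' P s) := by rw [hQP]
            _ ≤ _ := hunion
      _ = GG N p u s + ENNReal.ofReal s * (2 * (K * V)) := rfl
  · have h0 : Tendsto (fun s : ℝ => ENNReal.ofReal s) (𝓝[>] (0:ℝ)) (𝓝 0) := by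
      have h := (ENNReal.continuous_ofReal.tendsto 0).mono_left
        (nhdsWithin_le_nhds (s := Ioi (0:ℝ)))
      simpa using h
    have hfin2 : 2 * (K * V) ≠ ⊤ := by
      refine ENNReal.mul_ne_top (by norm_num) (ENNReal.mul_ne_top hK.ne hV.ne)
    have := ENNReal.Tendsto.mul_const h0 (Or.inr hfin2)
    simpa using this


lemma upper_step (hN : 0 < N) (hp : 0 < p) {u : EuclideanSpace ℝ (Fin N) → ℝ}
    (hu : Measurable u) (hfin : ∫⁻ x, ENNReal.ofReal (|u x| ^ p) < ⊤)
    {ε : ℝ} (hε0 : 0 < ε) (hε1 : ε < 1) :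
    limsup (GG N p u) (𝓝[>] (0:ℝ)) ≤
      2 * ENNReal.ofReal ((1 + ε) ^ p) * volume (ball (0 : EuclideanSpace ℝ (Fin N)) 1) *
        ∫⁻ x, ENNReal.ofReal (|u x| ^ p) := by
  have h1ε : (0:ℝ) ≤ 1 + ε := by linarith
  have h1ε' : (0:ℝ) ≤ 1 + ε⁻¹ := by positivity
  set v : EuclideanSpace ℝ (Fin N) → ℝ := fun x => |u x| with hv_def
  have hv : Measurable v := hu.abs
  have hvp : Measurable fun x => v x ^ p := (Real.continuous_rpow_const hp.le).measurable.comp hv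
  have hw : Measurable fun x => ENNReal.ofReal (v x ^ p) := hvp.ennreal_ofReal
  set ω := volume (ball (0 : EuclideanSpace ℝ (Fin N)) 1) with hω_def
  have hωfin : ω ≠ ⊤ := measure_ball_lt_top.ne
  set I := ∫⁻ x, ENNReal.ofReal (v x ^ p) with hI_def
  have hIfin : I ≠ ⊤ := hfin.ne
  -- rearrangement helper
  have rearr : ∀ C : ℝ, 0 ≤ C →
      (∫⁻ x, ENNReal.ofReal (C * v x ^ p) * ω) = ENNReal.ofReal C * ω * I := by
    intro C hC
    have : ∀ x, ENNReal.ofReal (C * v x ^ p) * ω =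
        (ENNReal.ofReal C * ω) * ENNReal.ofReal (v x ^ p) := by
      intro x; rw [ENNReal.ofReal_mul hC]; ring
    rw [lintegral_congr this, lintegral_const_mul _ hw, mul_assoc]
  -- sets
  set PP : ℝ → Set (EuclideanSpace ℝ (Fin N) × EuclideanSpace ℝ (Fin N)) := fun s =>
    {q | v q.2 ≤ ε * v q.1 ∧ s * dist q.1 q.2 ^ N ≤ (1 + ε) ^ p * v q.1 ^ p} with hPP_def
  set M : ℝ → Set (EuclideanSpace ℝ (Fin N) × EuclideanSpace ℝ (Fin N)) := fun s =>
    {q | ε * v q.1 < v q.2 ∧ ε * v q.2 < v q.1 ∧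
      s * dist q.1 q.2 ^ N ≤ (1 + ε⁻¹) ^ p * v q.1 ^ p} with hM_def
  have hPPmeas : ∀ s, MeasurableSet (PP s) := by
    intro s
    refine MeasurableSet.inter ?_ ?_
    · exact measurableSet_le (hv.comp measurable_snd) ((hv.comp measurable_fst).const_mul ε)
    · exact measurableSet_le ((measurable_dist.pow_const N).const_mul s)
        ((hvp.comp measurable_fst).const_mul _)
  have hMmeas : ∀ s, MeasurableSet (M s) := by
    intro s
    refine MeasurableSet.inter ?_ (MeasurableSet.inter ?_ ?_)
    · exact measurableSet_lt ((hv.comp measurable_fst).const_mul ε) (hv.comp measurable_snd)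
    · exact measurableSet_lt ((hv.comp measurable_snd).const_mul ε) (hv.comp measurable_fst)
    · exact measurableSet_le ((measurable_dist.pow_const N).const_mul s)
        ((hvp.comp measurable_fst).const_mul _)
  have hsecP : ∀ s, Measurable fun x => volume (Prod.mk x ⁻¹' PP s) := fun s =>
    measurable_measure_prodMk_left (hPPmeas s)
  have hsecM : ∀ s, Measurable fun x => volume (Prod.mk x ⁻¹' M s) := fun s =>
    measurable_measure_prodMk_left (hMmeas s)
  -- covering
  have hcover : ∀ s : ℝ,
      {q : EuclideanSpace ℝ (Fin N) × EuclideanSpace ℝ (Fin N) |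
        q.1 ≠ q.2 ∧ s * dist q.1 q.2 ^ N ≤ |u q.1 - u q.2| ^ p} ⊆
      (PP s ∪ Prod.swap ⁻¹' PP s) ∪ M s := by
    rintro s q ⟨hne, hq⟩
    have htri : |u q.1 - u q.2| ≤ v q.1 + v q.2 := abs_sub _ _
    by_cases hb : v q.2 ≤ ε * v q.1
    · refine Or.inl (Or.inl ⟨hb, hq.trans ?_⟩)
      have h5 : |u q.1 - u q.2| ≤ (1 + ε) * v q.1 := by nlinarith
      calc |u q.1 - u q.2| ^ p ≤ ((1 + ε) * v q.1) ^ p :=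
            Real.rpow_le_rpow (abs_nonneg _) h5 hp.le
        _ = (1 + ε) ^ p * v q.1 ^ p := Real.mul_rpow h1ε (abs_nonneg _)
    by_cases hb' : v q.1 ≤ ε * v q.2
    · refine Or.inl (Or.inr ?_)
      show v q.1 ≤ ε * v q.2 ∧ s * dist q.2 q.1 ^ N ≤ (1 + ε) ^ p * v q.2 ^ p
      rw [dist_comm]
      refine ⟨hb', hq.trans ?_⟩
      have h5 : |u q.1 - u q.2| ≤ (1 + ε) * v q.2 := by nlinarith
      calc |u q.1 - u q.2| ^ p ≤ ((1 + ε) * v q.2) ^ p :=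
            Real.rpow_le_rpow (abs_nonneg _) h5 hp.le
        _ = (1 + ε) ^ p * v q.2 ^ p := Real.mul_rpow h1ε (abs_nonneg _)
    push_neg at hb hb'
    refine Or.inr ⟨hb, hb', hq.trans ?_⟩
    have hv2 : v q.2 ≤ ε⁻¹ * v q.1 := by
      rw [le_inv_mul_iff₀ hε0]
      exact (mul_comm ε (v q.2)) ▸ hb'.le
    have h5 : |u q.1 - u q.2| ≤ (1 + ε⁻¹) * v q.1 := by nlinarith
    calc |u q.1 - u q.2| ^ p ≤ ((1 + ε⁻¹) * v q.1) ^ p :=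
          Real.rpow_le_rpow (abs_nonneg _) h5 hp.le
      _ = (1 + ε⁻¹) ^ p * v q.1 ^ p := Real.mul_rpow h1ε' (abs_nonneg _)
  -- bound for PP
  have hPbound : ∀ s : ℝ, 0 < s →
      ENNReal.ofReal s * volume (PP s) ≤ ENNReal.ofReal ((1 + ε) ^ p) * ω * I := by
    intro s hs
    have h1 : volume (PP s) = ∫⁻ x, volume (Prod.mk x ⁻¹' PP s) := Measure.prod_apply (hPPmeas s)
    rw [h1, ← lintegral_const_mul _ (hsecP s), ← rearr _ (Real.rpow_nonneg h1ε p)]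
    refine lintegral_mono fun x => ?_
    have hsub : Prod.mk x ⁻¹' PP s ⊆
        {y : EuclideanSpace ℝ (Fin N) | s * dist x y ^ N ≤ (1 + ε) ^ p * v x ^ p} :=
      fun y hy => hy.2
    calc ENNReal.ofReal s * volume (Prod.mk x ⁻¹' PP s)
        ≤ ENNReal.ofReal s *
            volume {y : EuclideanSpace ℝ (Fin N) | s * dist x y ^ N ≤ (1 + ε) ^ p * v x ^ p} :=
          mul_le_mul_right (measure_mono hsub) _
      _ = ENNReal.ofReal ((1 + ε) ^ p * v x ^ p) * ω :=
          vol_slab hN hs (mul_nonneg (Real.rpow_nonneg h1ε p) (Real.rpow_nonneg (abs_nonneg _) p)) x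
  -- middle term tends to 0
  have hMtend : Tendsto (fun s => ENNReal.ofReal s * volume (M s)) (𝓝[>] (0:ℝ)) (𝓝 0) := by
    have heq : ∀ s : ℝ, ENNReal.ofReal s * volume (M s) =
        ∫⁻ x, ENNReal.ofReal s * volume (Prod.mk x ⁻¹' M s) := by
      intro s
      rw [lintegral_const_mul _ (hsecM s), ← Measure.prod_apply (hMmeas s)]
      rfl
    have h0 : (0 : ℝ≥0∞) = ∫⁻ (_ : EuclideanSpace ℝ (Fin N)), (0:ℝ≥0∞) := by
      rw [lintegral_zero]
    rw [funext heq, h0]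
    refine tendsto_lintegral_filter_of_dominated_convergence
      (fun x => ENNReal.ofReal ((1 + ε⁻¹) ^ p * v x ^ p) * ω) ?_ ?_ ?_ ?_
    · exact Eventually.of_forall fun s => (hsecM s).const_mul _
    · filter_upwards [self_mem_nhdsWithin] with s hs
      refine Eventually.of_forall fun x => ?_
      have hs : (0:ℝ) < s := hs
      have hsub : Prod.mk x ⁻¹' M s ⊆
          {y : EuclideanSpace ℝ (Fin N) | s * dist x y ^ N ≤ (1 + ε⁻¹) ^ p * v x ^ p} :=
        fun y hy => hy.2.2
      calc ENNReal.ofReal s * volume (Prod.mk x ⁻¹' M s)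
          ≤ ENNReal.ofReal s *
              volume {y : EuclideanSpace ℝ (Fin N) | s * dist x y ^ N ≤ (1 + ε⁻¹) ^ p * v x ^ p} :=
            mul_le_mul_right (measure_mono hsub) _
        _ = ENNReal.ofReal ((1 + ε⁻¹) ^ p * v x ^ p) * ω :=
            vol_slab hN hs (mul_nonneg (Real.rpow_nonneg h1ε' p)
              (Real.rpow_nonneg (abs_nonneg _) p)) x
    · rw [rearr _ (Real.rpow_nonneg h1ε' p)]
      exact ENNReal.mul_ne_top (ENNReal.mul_ne_top ENNReal.ofReal_ne_top hωfin) hIfin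
    · refine Eventually.of_forall fun x => ?_
      rcases eq_or_lt_of_le (abs_nonneg (u x)) with hx | hx
      · have hempty : ∀ s : ℝ, Prod.mk x ⁻¹' M s = ∅ := by
          intro s
          ext y
          simp only [mem_preimage, mem_empty_iff_false, iff_false]
          rintro ⟨h1, h2, _⟩
          have : (0:ℝ) ≤ ε * v y := mul_nonneg hε0.le (abs_nonneg _)
          have hvx : v x = 0 := hx.symm
          rw [hvx] at h2
          linarith
        have : (fun s : ℝ => ENNReal.ofReal s * volume (Prod.mk x ⁻¹' M s)) = fun _ => 0 := by
          funext s; rw [hempty s, measure_empty, mul_zero]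
        rw [this]
        exact tendsto_const_nhds
      · have hK : volume {y : EuclideanSpace ℝ (Fin N) | ε * v x ≤ v y} < ⊤ :=
          markov hp hu hfin (mul_pos hε0 hx)
        have hle : ∀ s : ℝ, ENNReal.ofReal s * volume (Prod.mk x ⁻¹' M s) ≤
            ENNReal.ofReal s * volume {y : EuclideanSpace ℝ (Fin N) | ε * v x ≤ v y} := by
          intro s
          refine mul_le_mul_right (measure_mono fun y hy => hy.1.le) _
        have htop : Tendsto (fun s : ℝ => ENNReal.ofReal s *
            volume {y : EuclideanSpace ℝ (Fin N) | ε * v x ≤ v y}) (𝓝[>] (0:ℝ)) (𝓝 0) := by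
          have h1 : Tendsto (fun s : ℝ => ENNReal.ofReal s) (𝓝[>] (0:ℝ)) (𝓝 0) := by
            have h := (ENNReal.continuous_ofReal.tendsto 0).mono_left
              (nhdsWithin_le_nhds (s := Ioi (0:ℝ)))
            simpa using h
          have := ENNReal.Tendsto.mul_const h1 (Or.inr hK.ne)
          simpa using this
        exact tendsto_of_tendsto_of_tendsto_of_le_of_le tendsto_const_nhds htop
          (fun s => zero_le) hle
  -- conclude
  refine aux_limsup (f := GG N p u) (g := fun s => ENNReal.ofReal s * volume (M s)) ?_ hMtend
  filter_upwards [self_mem_nhdsWithin] with s hs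
  have hs : (0:ℝ) < s := hs
  have hswap : volume (Prod.swap ⁻¹' PP s) = volume (PP s) := by
    rw [Measure.volume_eq_prod]
    exact Measure.measurePreserving_swap.measure_preimage ((hPPmeas s).nullMeasurableSet)
  calc GG N p u s
      ≤ ENNReal.ofReal s * ((volume (PP s) + volume (Prod.swap ⁻¹' PP s)) + volume (M s)) := by
        refine mul_le_mul_right ((measure_mono (hcover s)).trans ?_) _
        exact (measure_union_le _ _).trans (add_le_add_left (measure_union_le _ _) _)
    _ = (ENNReal.ofReal s * volume (PP s) + ENNReal.ofReal s * volume (PP s)) +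
          ENNReal.ofReal s * volume (M s) := by rw [hswap]; ring
    _ ≤ (ENNReal.ofReal ((1 + ε) ^ p) * ω * I + ENNReal.ofReal ((1 + ε) ^ p) * ω * I) +
          ENNReal.ofReal s * volume (M s) :=
        add_le_add_left (add_le_add (hPbound s hs) (hPbound s hs)) _
    _ = 2 * ENNReal.ofReal ((1 + ε) ^ p) * ω * I + ENNReal.ofReal s * volume (M s) := by ring



end GY

open GY in
theorem stmt16 (N : ℕ) (hN : 0 < N) (p : ℝ) (hp : 1 ≤ p)
    (u : EuclideanSpace ℝ (Fin N) → ℝ) (hu : Measurable u)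
    (hfin : ∫⁻ x, ENNReal.ofReal (|u x| ^ p) < ⊤) :
    Tendsto (fun t : ℝ => ENNReal.ofReal (t ^ p) *
      volume {q : EuclideanSpace ℝ (Fin N) × EuclideanSpace ℝ (Fin N) |
        q.1 ≠ q.2 ∧ t ^ p * dist q.1 q.2 ^ N ≤ |u q.1 - u q.2| ^ p})
      (nhdsWithin 0 (Ioi 0))
      (nhds (2 * volume (ball (0 : EuclideanSpace ℝ (Fin N)) 1) *
        ∫⁻ x, ENNReal.ofReal (|u x| ^ p))) := by
  have hp' : (0:ℝ) < p := lt_of_lt_of_le zero_lt_one hp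
  set ω := volume (ball (0 : EuclideanSpace ℝ (Fin N)) 1) with hω_def
  have hωfin : ω ≠ ⊤ := measure_ball_lt_top.ne
  set I := ∫⁻ x, ENNReal.ofReal (|u x| ^ p) with hI_def
  have hIfin : I ≠ ⊤ := hfin.ne
  set v : EuclideanSpace ℝ (Fin N) → ℝ := fun x => |u x| with hv_def
  have hv : Measurable v := hu.abs
  have hw : Measurable fun x => ENNReal.ofReal (v x ^ p) :=
    ((Real.continuous_rpow_const hp'.le).measurable.comp hv).ennreal_ofReal
  -- the ε sequence
  set e : ℕ → ℝ := fun n => ((n:ℝ) + 2)⁻¹ with he_def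
  have he0 : ∀ n, 0 < e n := fun n => by positivity
  have he1 : ∀ n, e n < 1 := by
    intro n
    have h1 : (1:ℝ) < (n:ℝ) + 2 := by
      have := Nat.cast_nonneg (α := ℝ) n
      linarith
    rw [he_def]
    exact inv_lt_one_of_one_lt₀ h1
  have hetend : Tendsto e atTop (𝓝 0) := by
    refine tendsto_inv_atTop_zero.comp ?_
    exact tendsto_atTop_add_const_right _ 2 tendsto_natCast_atTop_atTop
  have heanti : Antitone e := by
    intro m n hmn
    rw [he_def]
    have h2 : (0:ℝ) < (m:ℝ) + 2 := by positivity
    have h3 : ((m:ℝ)) ≤ (n:ℝ) := Nat.cast_le.mpr hmn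
    exact inv_anti₀ h2 (by linarith)
  -- main limit for GG
  have hG : Tendsto (GG N p u) (𝓝[>] (0:ℝ)) (𝓝 (2 * ω * I)) := by
    refine tendsto_of_le_liminf_of_limsup_le ?_ ?_
    · -- lower bound
      set J : ℕ → ℝ≥0∞ := fun n => ∫⁻ x in {x | e n ≤ v x}, ENNReal.ofReal (v x ^ p) with hJ_def
      have hJtend : Tendsto J atTop (𝓝 I) := by
        have hmeas : ∀ n, MeasurableSet {x : EuclideanSpace ℝ (Fin N) | e n ≤ v x} :=
          fun n => measurableSet_le measurable_const hv
        have heq : ∀ n, J n = ∫⁻ x,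
            ({x : EuclideanSpace ℝ (Fin N) | e n ≤ v x}).indicator
              (fun x => ENNReal.ofReal (v x ^ p)) x := by
          intro n
          rw [lintegral_indicator (hmeas n)]
        have hIeq : I = ∫⁻ x, ENNReal.ofReal (v x ^ p) := rfl
        rw [funext heq, hIeq]
        refine lintegral_tendsto_of_tendsto_of_monotone ?_ ?_ ?_
        · exact fun n => (hw.indicator (hmeas n)).aemeasurable
        · refine Eventually.of_forall fun x => ?_
          intro m n hmn
          refine indicator_le_indicator_of_subset ?_ (fun _ => zero_le) _
          exact fun y hy => le_trans (heanti hmn) hy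
        · refine Eventually.of_forall fun x => ?_
          rcases eq_or_lt_of_le (abs_nonneg (u x)) with hx | hx
          · have hwx : ENNReal.ofReal (v x ^ p) = 0 := by
              rw [hv_def]
              simp only
              rw [← hx, Real.zero_rpow hp'.ne', ENNReal.ofReal_zero]
            have : ∀ n, ({x : EuclideanSpace ℝ (Fin N) | e n ≤ v x}).indicator
                (fun x => ENNReal.ofReal (v x ^ p)) x = 0 := by
              intro n
              by_cases hmem : x ∈ {x : EuclideanSpace ℝ (Fin N) | e n ≤ v x}
              · rw [indicator_of_mem hmem, hwx]
              · rw [indicator_of_notMem hmem]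
            rw [funext this, hwx]
            exact tendsto_const_nhds
          · have : ∀ᶠ n in atTop, ({x : EuclideanSpace ℝ (Fin N) | e n ≤ v x}).indicator
                (fun x => ENNReal.ofReal (v x ^ p)) x = ENNReal.ofReal (v x ^ p) := by
              have hev : ∀ᶠ n in atTop, e n < v x := hetend.eventually (gt_mem_nhds hx)
              filter_upwards [hev] with n hn
              exact Set.indicator_of_mem
                (show x ∈ {x : EuclideanSpace ℝ (Fin N) | e n ≤ v x} from le_of_lt hn) _
            exact tendsto_const_nhds.congr' (this.mono fun n h => h.symm)
      have hctend : Tendsto (fun n => ENNReal.ofReal ((1 - e n) ^ p)) atTop (𝓝 1) := by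
        have h1 : Tendsto (fun n => (1 - e n) ^ p) atTop (𝓝 1) := by
          have h2 : Tendsto (fun n => 1 - e n) atTop (𝓝 1) := by
            have := tendsto_const_nhds (x := (1:ℝ)) (f := atTop (α := ℕ))
            simpa using this.sub hetend
          have h3 : Tendsto (fun n => (1 - e n) ^ p) atTop (𝓝 ((1:ℝ) ^ p)) :=
            h2.rpow_const (Or.inl one_ne_zero)
          simpa [Real.one_rpow] using h3
        have := ENNReal.tendsto_ofReal h1
        simpa using this
      have hantend : Tendsto (fun n => 2 * ENNReal.ofReal ((1 - e n) ^ p) * ω * J n) atTop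
          (𝓝 (2 * ω * I)) := by
        have hmul : Tendsto (fun n => (2 * ω) * (ENNReal.ofReal ((1 - e n) ^ p) * J n)) atTop
            (𝓝 ((2 * ω) * (1 * I))) := by
          refine ENNReal.Tendsto.const_mul ?_ (Or.inr ?_)
          · exact ENNReal.Tendsto.mul hctend (Or.inl one_ne_zero) hJtend (Or.inr ENNReal.one_ne_top)
          · exact ENNReal.mul_ne_top (by norm_num) hωfin
        have heq2 : (fun n => (2 * ω) * (ENNReal.ofReal ((1 - e n) ^ p) * J n)) =
            fun n => 2 * ENNReal.ofReal ((1 - e n) ^ p) * ω * J n := by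
          funext n; ring
        rw [heq2] at hmul
        have : (2 * ω) * (1 * I) = 2 * ω * I := by ring
        rwa [this] at hmul
      refine le_of_tendsto hantend ?_
      refine Eventually.of_forall fun n => ?_
      exact lower_step hN hp' hu hfin (he0 n) (he1 n) (he0 n)
    · -- upper bound
      have hbtend : Tendsto (fun n => 2 * ENNReal.ofReal ((1 + e n) ^ p) * ω * I) atTop
          (𝓝 (2 * ω * I)) := by
        have hctend : Tendsto (fun n => ENNReal.ofReal ((1 + e n) ^ p)) atTop (𝓝 1) := by
          have h1 : Tendsto (fun n => (1 + e n) ^ p) atTop (𝓝 1) := by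
            have h2 : Tendsto (fun n => 1 + e n) atTop (𝓝 1) := by
              have := tendsto_const_nhds (x := (1:ℝ)) (f := atTop (α := ℕ))
              simpa using this.add hetend
            have h3 : Tendsto (fun n => (1 + e n) ^ p) atTop (𝓝 ((1:ℝ) ^ p)) :=
              h2.rpow_const (Or.inl one_ne_zero)
            simpa [Real.one_rpow] using h3
          have := ENNReal.tendsto_ofReal h1
          simpa using this
        have hmul : Tendsto (fun n => (ENNReal.ofReal ((1 + e n) ^ p)) * (2 * ω * I)) atTop
            (𝓝 (1 * (2 * ω * I))) := by
          refine ENNReal.Tendsto.mul_const hctend (Or.inr ?_)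
          exact ENNReal.mul_ne_top (ENNReal.mul_ne_top (by norm_num) hωfin) hIfin
        have heq2 : (fun n => (ENNReal.ofReal ((1 + e n) ^ p)) * (2 * ω * I)) =
            fun n => 2 * ENNReal.ofReal ((1 + e n) ^ p) * ω * I := by
          funext n; ring
        rw [heq2, one_mul] at hmul
        exact hmul
      refine ge_of_tendsto hbtend ?_
      refine Eventually.of_forall fun n => ?_
      exact upper_step hN hp' hu hfin (he0 n) (he1 n)
  -- compose with t ↦ t ^ p
  have hpow : Tendsto (fun t : ℝ => t ^ p) (𝓝[>] (0:ℝ)) (𝓝[>] (0:ℝ)) := by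
    refine tendsto_nhdsWithin_of_tendsto_nhds_of_eventually_within _ ?_ ?_
    · have hc : ContinuousAt (fun t : ℝ => t ^ p) 0 :=
        Real.continuousAt_rpow_const 0 p (Or.inr hp'.le)
      have := hc.tendsto.mono_left (nhdsWithin_le_nhds (s := Ioi (0:ℝ)))
      rwa [Real.zero_rpow hp'.ne'] at this
    · filter_upwards [self_mem_nhdsWithin] with t ht
      exact Real.rpow_pos_of_pos ht p
  exact hG.comp hpow
end

section
/- For p ∈ [1,∞) and u ∈ L^p(ℝ^N), with E_t = {(x,y) : x ≠ y, |u(x)-u(y)|^p ≥ t^p|x-y|^N}, one has 2ω_N‖u‖_p^p ≤ sup_{t>0} t^p·|E_t|_{2N} ≤ 2^{p+1}ω_N‖u‖_p^p. -/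
open MeasureTheory Metric Set
open Filter Topology

private lemma slice_eq (N : ℕ) (hN : 0 < N) (x : EuclideanSpace ℝ (Fin N)) {s c : ℝ}
    (hs : 0 < s) (hc : 0 ≤ c) :
    {y : EuclideanSpace ℝ (Fin N) | s * dist x y ^ N ≤ c} =
      closedBall x ((c / s) ^ (N : ℝ)⁻¹) := by
  ext y
  simp only [Set.mem_setOf_eq, Metric.mem_closedBall, dist_comm y x]
  rw [Real.le_rpow_inv_iff_of_pos dist_nonneg (div_nonneg hc hs.le) (by exact_mod_cast hN),
    Real.rpow_natCast, le_div_iff₀ hs, mul_comm]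

private lemma vol_slice (N : ℕ) (hN : 0 < N) (x : EuclideanSpace ℝ (Fin N)) {s c : ℝ}
    (hs : 0 < s) (hc : 0 ≤ c) :
    volume {y : EuclideanSpace ℝ (Fin N) | s * dist x y ^ N ≤ c} =
      ENNReal.ofReal (c / s) * volume (ball (0 : EuclideanSpace ℝ (Fin N)) 1) := by
  rw [slice_eq N hN x hs hc,
    Measure.addHaar_closedBall _ _ (Real.rpow_nonneg (div_nonneg hc hs.le) _)]
  rw [finrank_euclideanSpace_fin, Real.rpow_inv_natCast_pow (div_nonneg hc hs.le) hN.ne']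

private lemma upper_bd (N : ℕ) (hN : 0 < N) (p : ℝ) (hp : 1 ≤ p)
    (u : EuclideanSpace ℝ (Fin N) → ℝ) (hu : Measurable u) :
    (⨆ t ∈ Ioi (0:ℝ), ENNReal.ofReal (t ^ p) *
        volume {q : EuclideanSpace ℝ (Fin N) × EuclideanSpace ℝ (Fin N) |
          q.1 ≠ q.2 ∧ t ^ p * dist q.1 q.2 ^ N ≤ |u q.1 - u q.2| ^ p}) ≤
      ENNReal.ofReal (2 ^ (p + 1)) * volume (ball (0 : EuclideanSpace ℝ (Fin N)) 1) *
        (∫⁻ x, ENNReal.ofReal (|u x| ^ p)) := by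
  have hp0 : (0:ℝ) ≤ p := le_trans zero_le_one hp
  set ω := volume (ball (0 : EuclideanSpace ℝ (Fin N)) 1) with hω
  set M := ∫⁻ x, ENNReal.ofReal (|u x| ^ p) with hM
  have hum : Measurable fun x => ENNReal.ofReal (|u x| ^ p) :=
    ((Real.continuous_rpow_const hp0).measurable.comp hu.abs).ennreal_ofReal
  refine iSup₂_le fun t ht => ?_
  have ht0 : (0:ℝ) < t := ht
  have hs : (0:ℝ) < t ^ p := Real.rpow_pos_of_pos ht0 p
  set s := t ^ p with hsdef
  set A : Set (EuclideanSpace ℝ (Fin N) × EuclideanSpace ℝ (Fin N)) :=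
    {q | s * dist q.1 q.2 ^ N ≤ 2 ^ p * |u q.1| ^ p} with hAdef
  set B : Set (EuclideanSpace ℝ (Fin N) × EuclideanSpace ℝ (Fin N)) :=
    {q | s * dist q.1 q.2 ^ N ≤ 2 ^ p * |u q.2| ^ p} with hBdef
  have hAm : MeasurableSet A := by
    apply measurableSet_le
    · exact (continuous_const.mul (continuous_dist.pow N)).measurable
    · exact measurable_const.mul
        ((Real.continuous_rpow_const hp0).measurable.comp (hu.comp measurable_fst).abs)
  have hBm : MeasurableSet B := by
    apply measurableSet_le
    · exact (continuous_const.mul (continuous_dist.pow N)).measurable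
    · exact measurable_const.mul
        ((Real.continuous_rpow_const hp0).measurable.comp (hu.comp measurable_snd).abs)
  have hc : ∀ z : ℝ, (0:ℝ) ≤ 2 ^ p * |z| ^ p := by
    intro z; positivity
  -- E ⊆ A ∪ B
  have hsub : {q : EuclideanSpace ℝ (Fin N) × EuclideanSpace ℝ (Fin N) |
      q.1 ≠ q.2 ∧ t ^ p * dist q.1 q.2 ^ N ≤ |u q.1 - u q.2| ^ p} ⊆ A ∪ B := by
    rintro ⟨x, y⟩ ⟨-, hle⟩
    have key : |u x - u y| ^ p ≤ 2 ^ p * |u x| ^ p ∨ |u x - u y| ^ p ≤ 2 ^ p * |u y| ^ p := by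
      rcases le_total |u x| |u y| with h | h
      · refine Or.inr ?_
        calc |u x - u y| ^ p ≤ (2 * |u y|) ^ p := by
              apply Real.rpow_le_rpow (abs_nonneg _) _ hp0
              calc |u x - u y| ≤ |u x| + |u y| := abs_sub _ _
                _ ≤ 2 * |u y| := by linarith
          _ = 2 ^ p * |u y| ^ p := Real.mul_rpow (by norm_num) (abs_nonneg _)
      · refine Or.inl ?_
        calc |u x - u y| ^ p ≤ (2 * |u x|) ^ p := by
              apply Real.rpow_le_rpow (abs_nonneg _) _ hp0
              calc |u x - u y| ≤ |u x| + |u y| := abs_sub _ _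
                _ ≤ 2 * |u x| := by linarith
          _ = 2 ^ p * |u x| ^ p := Real.mul_rpow (by norm_num) (abs_nonneg _)
    rcases key with h | h
    · exact Or.inl (le_trans hle h)
    · exact Or.inr (le_trans hle h)
  have hvolA : volume A = ENNReal.ofReal (2 ^ p / s) * ω * M := by
    rw [Measure.volume_eq_prod, Measure.prod_apply hAm]
    have : ∀ x : EuclideanSpace ℝ (Fin N), volume (Prod.mk x ⁻¹' A)
        = (ENNReal.ofReal (2 ^ p / s) * ω) * ENNReal.ofReal (|u x| ^ p) := by
      intro x
      have : Prod.mk x ⁻¹' A =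
          {y : EuclideanSpace ℝ (Fin N) | s * dist x y ^ N ≤ 2 ^ p * |u x| ^ p} := rfl
      rw [this, vol_slice N hN x hs (hc _)]
      rw [show (2:ℝ) ^ p * |u x| ^ p / s = (2 ^ p / s) * |u x| ^ p by ring,
        ENNReal.ofReal_mul (by positivity)]
      ring
    simp only [this]
    rw [lintegral_const_mul _ hum]

  have hvolB : volume B = ENNReal.ofReal (2 ^ p / s) * ω * M := by
    rw [Measure.volume_eq_prod, Measure.prod_apply_symm hBm]
    have : ∀ y : EuclideanSpace ℝ (Fin N), volume ((fun x => (x, y)) ⁻¹' B)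
        = (ENNReal.ofReal (2 ^ p / s) * ω) * ENNReal.ofReal (|u y| ^ p) := by
      intro y
      have h1 : (fun x => (x, y)) ⁻¹' B =
          {x : EuclideanSpace ℝ (Fin N) | s * dist y x ^ N ≤ 2 ^ p * |u y| ^ p} := by
        ext x; simp only [Set.mem_preimage, hBdef, Set.mem_setOf_eq, dist_comm]
      rw [h1, vol_slice N hN y hs (hc _)]
      rw [show (2:ℝ) ^ p * |u y| ^ p / s = (2 ^ p / s) * |u y| ^ p by ring,
        ENNReal.ofReal_mul (by positivity)]
      ring
    simp only [this]
    rw [lintegral_const_mul _ hum]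

  calc ENNReal.ofReal s * volume {q : EuclideanSpace ℝ (Fin N) × EuclideanSpace ℝ (Fin N) |
        q.1 ≠ q.2 ∧ t ^ p * dist q.1 q.2 ^ N ≤ |u q.1 - u q.2| ^ p}
      ≤ ENNReal.ofReal s * (volume A + volume B) := by
        gcongr
        exact le_trans (measure_mono hsub) (measure_union_le _ _)
    _ = (ENNReal.ofReal s * ENNReal.ofReal (2 ^ p / s)) * (2 * ω * M) := by
        rw [hvolA, hvolB]; ring
    _ = ENNReal.ofReal (2 ^ p) * (2 * ω * M) := by
        rw [← ENNReal.ofReal_mul hs.le, mul_div_cancel₀ _ hs.ne']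
    _ = ENNReal.ofReal (2 ^ (p + 1)) * ω * M := by
        rw [Real.rpow_add (by norm_num) p 1, Real.rpow_one,
          ENNReal.ofReal_mul (by positivity), ENNReal.ofReal_ofNat]
        ring

private lemma lower_bd (N : ℕ) (hN : 0 < N) (p : ℝ) (hp : 1 ≤ p)
    (u : EuclideanSpace ℝ (Fin N) → ℝ) (hu : Measurable u)
    (hfin : ∫⁻ x, ENNReal.ofReal (|u x| ^ p) < ⊤) :
    2 * volume (ball (0 : EuclideanSpace ℝ (Fin N)) 1) *
        (∫⁻ x, ENNReal.ofReal (|u x| ^ p)) ≤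
      ⨆ t ∈ Ioi (0:ℝ), ENNReal.ofReal (t ^ p) *
        volume {q : EuclideanSpace ℝ (Fin N) × EuclideanSpace ℝ (Fin N) |
          q.1 ≠ q.2 ∧ t ^ p * dist q.1 q.2 ^ N ≤ |u q.1 - u q.2| ^ p} := by
  have hp0 : (0:ℝ) ≤ p := le_trans zero_le_one hp
  have hppos : (0:ℝ) < p := lt_of_lt_of_le one_pos hp
  haveI : Nonempty (Fin N) := ⟨⟨0, hN⟩⟩
  set ω := volume (ball (0 : EuclideanSpace ℝ (Fin N)) 1) with hω
  set M := ∫⁻ x, ENNReal.ofReal (|u x| ^ p) with hM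
  set L := ⨆ t ∈ Ioi (0:ℝ), ENNReal.ofReal (t ^ p) *
        volume {q : EuclideanSpace ℝ (Fin N) × EuclideanSpace ℝ (Fin N) |
          q.1 ≠ q.2 ∧ t ^ p * dist q.1 q.2 ^ N ≤ |u q.1 - u q.2| ^ p} with hL
  have hum : Measurable fun x => ENNReal.ofReal (|u x| ^ p) :=
    ((Real.continuous_rpow_const hp0).measurable.comp hu.abs).ennreal_ofReal
  have hωtop : ω ≠ ⊤ := measure_ball_lt_top.ne
  -- Chebyshev
  have cheb : ∀ a : ℝ, 0 < a →
      volume {y : EuclideanSpace ℝ (Fin N) | a ≤ |u y|} ≤ M / ENNReal.ofReal (a ^ p) := by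
    intro a ha
    have hsub : {y : EuclideanSpace ℝ (Fin N) | a ≤ |u y|} ⊆
        {y | ENNReal.ofReal (a ^ p) ≤ ENNReal.ofReal (|u y| ^ p)} := fun y hy =>
      ENNReal.ofReal_le_ofReal (Real.rpow_le_rpow ha.le hy hp0)
    refine le_trans (measure_mono hsub) ?_
    exact meas_ge_le_lintegral_div hum.aemeasurable
      (ENNReal.ofReal_pos.mpr (Real.rpow_pos_of_pos ha p)).ne' ENNReal.ofReal_ne_top
  set Sd : ℝ → Set (EuclideanSpace ℝ (Fin N)) := fun δ => {x | δ ≤ |u x|} with hSd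
  have hSmeas : ∀ δ, MeasurableSet (Sd δ) := fun δ => measurableSet_le measurable_const hu.abs
  -- key inequality
  have key : ∀ ε δ t : ℝ, 0 < ε → ε < 1 → 0 < δ → 0 < t →
      2 * ω * ENNReal.ofReal ((1 - ε) ^ p) * (∫⁻ x in Sd δ, ENNReal.ofReal (|u x| ^ p)) ≤
        L + ENNReal.ofReal (t ^ p) *
          (2 * (M / ENNReal.ofReal ((ε * δ) ^ p)) * volume (Sd δ)) := by
    intro ε δ t hε hε1 hδ ht
    have h1ε : (0:ℝ) < 1 - ε := by linarith
    set s := t ^ p with hsdef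
    have hspos : 0 < s := Real.rpow_pos_of_pos ht p
    set K := M / ENNReal.ofReal ((ε * δ) ^ p) with hKdef
    set c : EuclideanSpace ℝ (Fin N) → ℝ := fun x => ((1 - ε) * |u x|) ^ p with hc
    have hc0 : ∀ x, 0 ≤ c x := fun x => Real.rpow_nonneg (by positivity) _
    set A : Set (EuclideanSpace ℝ (Fin N) × EuclideanSpace ℝ (Fin N)) :=
      {q | q.1 ≠ q.2 ∧ (δ ≤ |u q.1| ∧ (|u q.2| ≤ ε * |u q.1| ∧
        s * dist q.1 q.2 ^ N ≤ c q.1))} with hAdef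
    have hAm : MeasurableSet A := by
      have h1 : MeasurableSet {q : EuclideanSpace ℝ (Fin N) × EuclideanSpace ℝ (Fin N) |
          q.1 ≠ q.2} := (measurableSet_eq_fun measurable_fst measurable_snd).compl
      have h2 : MeasurableSet {q : EuclideanSpace ℝ (Fin N) × EuclideanSpace ℝ (Fin N) |
          δ ≤ |u q.1|} := measurableSet_le measurable_const (hu.comp measurable_fst).abs
      have h3 : MeasurableSet {q : EuclideanSpace ℝ (Fin N) × EuclideanSpace ℝ (Fin N) |
          |u q.2| ≤ ε * |u q.1|} := measurableSet_le (hu.comp measurable_snd).abs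
        (measurable_const.mul (hu.comp measurable_fst).abs)
      have h4 : MeasurableSet {q : EuclideanSpace ℝ (Fin N) × EuclideanSpace ℝ (Fin N) |
          s * dist q.1 q.2 ^ N ≤ c q.1} := measurableSet_le
        ((continuous_const.mul (continuous_dist.pow N)).measurable)
        ((Real.continuous_rpow_const hp0).measurable.comp
          ((hu.comp measurable_fst).abs.const_mul (1 - ε)))
      exact h1.inter (h2.inter (h3.inter h4))
    set B := Prod.swap ⁻¹' A with hBdef
    have hBm : MeasurableSet B := hAm.preimage measurable_swap
    have hvolB : volume B = volume A := by
      rw [hBdef, Measure.volume_eq_prod]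
      exact Measure.measurePreserving_swap.measure_preimage hAm.nullMeasurableSet
    have hdisj : Disjoint A B := by
      rw [Set.disjoint_left]
      rintro ⟨x, y⟩ ⟨-, hδ1, hε1', -⟩ hB
      have hA2 : ((x, y) : _ × _).swap ∈ A := hB
      obtain ⟨-, hδ2, hε2', -⟩ := hA2
      simp only [Prod.swap] at hδ2 hε2'
      nlinarith [abs_nonneg (u x), abs_nonneg (u y)]
    -- A ∪ B ⊆ E_t
    have hAE : ∀ q : EuclideanSpace ℝ (Fin N) × EuclideanSpace ℝ (Fin N), q ∈ A →
        q.1 ≠ q.2 ∧ t ^ p * dist q.1 q.2 ^ N ≤ |u q.1 - u q.2| ^ p := by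
      rintro ⟨x, y⟩ ⟨hne, hδ1, hεxy, hd⟩
      refine ⟨hne, le_trans hd ?_⟩
      apply Real.rpow_le_rpow (by positivity) _ hp0
      calc (1 - ε) * |u x| = |u x| - ε * |u x| := by ring
        _ ≤ |u x| - |u y| := by linarith
        _ ≤ |u x - u y| := abs_sub_abs_le_abs_sub _ _
    have hsubE : A ∪ B ⊆ {q : EuclideanSpace ℝ (Fin N) × EuclideanSpace ℝ (Fin N) |
        q.1 ≠ q.2 ∧ t ^ p * dist q.1 q.2 ^ N ≤ |u q.1 - u q.2| ^ p} := by
      rintro q (hq | hq)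
      · exact hAE q hq
      · obtain ⟨hne, hle⟩ := hAE q.swap hq
        refine ⟨fun h => hne (by simp [h]), ?_⟩
        simpa [dist_comm, abs_sub_comm] using hle
    -- pointwise slice bound on Sd δ
    have hptwise : ∀ x ∈ Sd δ,
        ENNReal.ofReal (c x / s) * ω ≤ volume (Prod.mk x ⁻¹' A) + K := by
      intro x hx
      have hxS : δ ≤ |u x| := hx
      have hincl : {y : EuclideanSpace ℝ (Fin N) | s * dist x y ^ N ≤ c x} ⊆
          (Prod.mk x ⁻¹' A) ∪ ({y | ε * |u x| < |u y|} ∪ {x}) := by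
        intro y hy
        by_cases hxy : y = x
        · exact Or.inr (Or.inr hxy)
        by_cases huy : |u y| ≤ ε * |u x|
        · exact Or.inl ⟨fun h => hxy h.symm, hxS, huy, hy⟩
        · exact Or.inr (Or.inl (lt_of_not_ge huy))
      have hmid : volume {y : EuclideanSpace ℝ (Fin N) | ε * |u x| < |u y|} ≤ K := by
        have : {y : EuclideanSpace ℝ (Fin N) | ε * |u x| < |u y|} ⊆
            {y | ε * δ ≤ |u y|} := by
          intro y hy
          have : ε * δ ≤ ε * |u x| := by nlinarith
          exact le_trans this (le_of_lt hy)
        exact le_trans (measure_mono this) (cheb (ε * δ) (by positivity))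
      calc ENNReal.ofReal (c x / s) * ω
          = volume {y : EuclideanSpace ℝ (Fin N) | s * dist x y ^ N ≤ c x} :=
            (vol_slice N hN x hspos (hc0 x)).symm
        _ ≤ volume ((Prod.mk x ⁻¹' A) ∪ ({y : EuclideanSpace ℝ (Fin N) |
              ε * |u x| < |u y|} ∪ {x})) := measure_mono hincl
        _ ≤ volume (Prod.mk x ⁻¹' A) +
              (volume {y : EuclideanSpace ℝ (Fin N) | ε * |u x| < |u y|} +
                volume ({x} : Set (EuclideanSpace ℝ (Fin N)))) :=
            le_trans (measure_union_le _ _) (by gcongr; exact measure_union_le _ _)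
        _ = volume (Prod.mk x ⁻¹' A) +
              volume {y : EuclideanSpace ℝ (Fin N) | ε * |u x| < |u y|} := by
            rw [measure_singleton, add_zero]
        _ ≤ volume (Prod.mk x ⁻¹' A) + K := by gcongr
    -- integrate over Sd δ
    have step1 : (ENNReal.ofReal ((1 - ε) ^ p / s) * ω) *
        (∫⁻ x in Sd δ, ENNReal.ofReal (|u x| ^ p)) ≤ volume A + K * volume (Sd δ) := by
      have lhs_eq : (ENNReal.ofReal ((1 - ε) ^ p / s) * ω) *
          (∫⁻ x in Sd δ, ENNReal.ofReal (|u x| ^ p)) =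
          ∫⁻ x in Sd δ, ENNReal.ofReal (c x / s) * ω := by
        rw [← lintegral_const_mul _ hum]
        refine lintegral_congr fun x => ?_
        show ENNReal.ofReal ((1 - ε) ^ p / s) * ω * ENNReal.ofReal (|u x| ^ p) =
          ENNReal.ofReal (((1 - ε) * |u x|) ^ p / s) * ω
        rw [Real.mul_rpow h1ε.le (abs_nonneg _),
          show (1 - ε) ^ p * |u x| ^ p / s = ((1 - ε) ^ p / s) * |u x| ^ p by ring,
          ENNReal.ofReal_mul (by positivity)]
        ring
      rw [lhs_eq]
      calc ∫⁻ x in Sd δ, ENNReal.ofReal (c x / s) * ω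
          ≤ ∫⁻ x in Sd δ, (volume (Prod.mk x ⁻¹' A) + K) :=
            setLIntegral_mono' (hSmeas δ) hptwise
        _ = (∫⁻ x in Sd δ, volume (Prod.mk x ⁻¹' A)) + K * volume (Sd δ) := by
            rw [lintegral_add_right _ measurable_const, setLIntegral_const]
        _ ≤ (∫⁻ x, volume (Prod.mk x ⁻¹' A)) + K * volume (Sd δ) := by
            gcongr
            exact Measure.restrict_le_self
        _ = volume A + K * volume (Sd δ) := by
            rw [Measure.volume_eq_prod, Measure.prod_apply hAm]
    -- assemble
    have hterm : ENNReal.ofReal s * volume {q : EuclideanSpace ℝ (Fin N) ×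
        EuclideanSpace ℝ (Fin N) |
        q.1 ≠ q.2 ∧ t ^ p * dist q.1 q.2 ^ N ≤ |u q.1 - u q.2| ^ p} ≤ L := by
      rw [hL]
      exact le_iSup₂ (f := fun t (_ : t ∈ Ioi (0:ℝ)) => ENNReal.ofReal (t ^ p) *
        volume {q : EuclideanSpace ℝ (Fin N) × EuclideanSpace ℝ (Fin N) |
          q.1 ≠ q.2 ∧ t ^ p * dist q.1 q.2 ^ N ≤ |u q.1 - u q.2| ^ p}) t ht
    have hofReal : ENNReal.ofReal s * ENNReal.ofReal ((1 - ε) ^ p / s) =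
        ENNReal.ofReal ((1 - ε) ^ p) := by
      rw [← ENNReal.ofReal_mul hspos.le, mul_comm, div_mul_cancel₀ _ hspos.ne']
    calc 2 * ω * ENNReal.ofReal ((1 - ε) ^ p) *
          (∫⁻ x in Sd δ, ENNReal.ofReal (|u x| ^ p))
        = (2 * ENNReal.ofReal s) * ((ENNReal.ofReal ((1 - ε) ^ p / s) * ω) *
            (∫⁻ x in Sd δ, ENNReal.ofReal (|u x| ^ p))) := by
          rw [show 2 * ENNReal.ofReal s * ((ENNReal.ofReal ((1 - ε) ^ p / s) * ω) *
            (∫⁻ x in Sd δ, ENNReal.ofReal (|u x| ^ p))) =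
            2 * (ENNReal.ofReal s * ENNReal.ofReal ((1 - ε) ^ p / s)) * ω *
            (∫⁻ x in Sd δ, ENNReal.ofReal (|u x| ^ p)) by ring, hofReal]
          ring
      _ ≤ (2 * ENNReal.ofReal s) * (volume A + K * volume (Sd δ)) := by gcongr
      _ = ENNReal.ofReal s * (volume A + volume B) +
            ENNReal.ofReal s * (2 * K * volume (Sd δ)) := by
          rw [hvolB]; ring
      _ = ENNReal.ofReal s * volume (A ∪ B) +
            ENNReal.ofReal s * (2 * K * volume (Sd δ)) := by
          rw [measure_union hdisj hBm]
      _ ≤ L + ENNReal.ofReal (t ^ p) * (2 * K * volume (Sd δ)) := by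
          gcongr
          exact le_trans (by gcongr) hterm
  -- step 2: remove t
  have step2 : ∀ ε δ : ℝ, 0 < ε → ε < 1 → 0 < δ →
      2 * ω * ENNReal.ofReal ((1 - ε) ^ p) *
        (∫⁻ x in Sd δ, ENNReal.ofReal (|u x| ^ p)) ≤ L := by
    intro ε δ hε hε1 hδ
    set D := 2 * (M / ENNReal.ofReal ((ε * δ) ^ p)) * volume (Sd δ) with hD
    have hDne : D ≠ ⊤ := by
      have h1 : M / ENNReal.ofReal ((ε * δ) ^ p) ≠ ⊤ :=
        (ENNReal.div_lt_top hfin.ne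
          (ENNReal.ofReal_pos.mpr (Real.rpow_pos_of_pos (by positivity) p)).ne').ne
      have h2 : volume (Sd δ) ≠ ⊤ :=
        (lt_of_le_of_lt (cheb δ hδ) (ENNReal.div_lt_top hfin.ne
          (ENNReal.ofReal_pos.mpr (Real.rpow_pos_of_pos hδ p)).ne')).ne
      exact ENNReal.mul_ne_top (ENNReal.mul_ne_top (by norm_num) h1) h2
    have htend : Tendsto (fun n : ℕ => L + ENNReal.ofReal ((1 / ((n:ℝ) + 1)) ^ p) * D)
        atTop (𝓝 L) := by
      have h0 : Tendsto (fun n : ℕ => ENNReal.ofReal ((1 / ((n:ℝ) + 1)) ^ p)) atTop (𝓝 0) := by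
        have hb : Tendsto (fun n : ℕ => ENNReal.ofReal (1 / ((n:ℝ) + 1))) atTop (𝓝 0) := by
          have := ENNReal.tendsto_ofReal tendsto_one_div_add_atTop_nhds_zero_nat
          simpa using this
        refine tendsto_of_tendsto_of_tendsto_of_le_of_le tendsto_const_nhds hb
          (fun n => zero_le) (fun n => ?_)
        apply ENNReal.ofReal_le_ofReal
        have h01 : 0 < 1 / ((n:ℝ) + 1) := by positivity
        have h11 : 1 / ((n:ℝ) + 1) ≤ 1 := by
          rw [div_le_one (by positivity)]
          linarith [Nat.cast_nonneg (α := ℝ) n]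
        calc (1 / ((n:ℝ) + 1)) ^ p ≤ (1 / ((n:ℝ) + 1)) ^ (1:ℝ) :=
              Real.rpow_le_rpow_of_exponent_ge h01 h11 hp
          _ = 1 / ((n:ℝ) + 1) := Real.rpow_one _
      have h1 := ENNReal.Tendsto.mul_const h0 (Or.inr hDne)
      rw [zero_mul] at h1
      have h2 := Tendsto.add (tendsto_const_nhds (x := L)) h1
      rw [add_zero] at h2
      exact h2
    refine ge_of_tendsto htend (Filter.Eventually.of_forall fun n => ?_)
    exact key ε δ (1 / ((n:ℝ) + 1)) hε hε1 hδ (by positivity)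
  -- step 3
  set f : ℕ → ℝ := fun n => 1 / ((n:ℝ) + 1) with hf
  have hfpos : ∀ n, 0 < f n := fun n => by positivity
  have hIn : Tendsto (fun n => ∫⁻ x in Sd (f n), ENNReal.ofReal (|u x| ^ p)) atTop (𝓝 M) := by
    set ν := volume.withDensity (fun x => ENNReal.ofReal (|u x| ^ p)) with hν
    have hrw : ∀ n, (∫⁻ x in Sd (f n), ENNReal.ofReal (|u x| ^ p)) = ν (Sd (f n)) :=
      fun n => (withDensity_apply _ (hSmeas _)).symm
    simp only [hrw]
    have hmono : Monotone fun n => Sd (f n) := by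
      intro m n hmn x hx
      have hle : f n ≤ f m := by
        apply one_div_le_one_div_of_le (by positivity)
        exact_mod_cast add_le_add_left (Nat.cast_le.mpr hmn) 1
      exact le_trans hle hx
    have hUn : ⋃ n, Sd (f n) = {x | u x ≠ 0} := by
      ext x
      simp only [Set.mem_iUnion, hSd, Set.mem_setOf_eq]
      constructor
      · rintro ⟨n, hn⟩ h0
        rw [h0, abs_zero] at hn
        exact absurd hn (not_le.mpr (hfpos n))
      · intro hx
        obtain ⟨n, hn⟩ := exists_nat_one_div_lt (abs_pos.mpr hx)
        exact ⟨n, hn.le⟩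
    have hmeas0 : MeasurableSet {x : EuclideanSpace ℝ (Fin N) | u x ≠ 0} :=
      (hu (measurableSet_singleton 0)).compl
    have hzero : ∫⁻ x in {x : EuclideanSpace ℝ (Fin N) | u x ≠ 0}ᶜ,
        ENNReal.ofReal (|u x| ^ p) = 0 := by
      have hae : ∀ᵐ x ∂(volume.restrict {x : EuclideanSpace ℝ (Fin N) | u x ≠ 0}ᶜ),
          ENNReal.ofReal (|u x| ^ p) = 0 := by
        refine (ae_restrict_iff' hmeas0.compl).mpr (ae_of_all _ fun x hx => ?_)
        have hx0 : u x = 0 := not_not.mp hx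
        rw [hx0, abs_zero, Real.zero_rpow hppos.ne', ENNReal.ofReal_zero]
      exact (lintegral_congr_ae hae).trans lintegral_zero
    have hlast : ν {x | u x ≠ 0} = M := by
      rw [hν, withDensity_apply _ hmeas0]
      conv_rhs => rw [hM,
        ← lintegral_add_compl (fun x => ENNReal.ofReal (|u x| ^ p)) hmeas0]
      rw [hzero, add_zero]
    have htu := tendsto_measure_iUnion_atTop (μ := ν) hmono
    rw [hUn, hlast] at htu
    exact htu
  have hbn : Tendsto (fun n : ℕ => ENNReal.ofReal ((1 - f n) ^ p)) atTop (𝓝 1) := by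
    have h1 : Tendsto (fun n : ℕ => (1 - f n : ℝ)) atTop (𝓝 1) := by
      have h := (tendsto_const_nhds (x := (1:ℝ))).sub tendsto_one_div_add_atTop_nhds_zero_nat
      rw [sub_zero] at h
      exact h
    have h2 : Tendsto (fun n : ℕ => ((1 - f n : ℝ)) ^ p) atTop (𝓝 1) := by
      have h := h1.rpow_const (Or.inr hp0)
      simpa [Real.one_rpow] using h
    have h3 := ENNReal.tendsto_ofReal h2
    simpa using h3
  have hmul : Tendsto (fun n : ℕ => 2 * ω * (ENNReal.ofReal ((1 - f n) ^ p) *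
      (∫⁻ x in Sd (f n), ENNReal.ofReal (|u x| ^ p)))) atTop (𝓝 (2 * ω * (1 * M))) := by
    refine ENNReal.Tendsto.const_mul ?_ (Or.inr (ENNReal.mul_ne_top (by norm_num) hωtop))
    exact ENNReal.Tendsto.mul hbn (Or.inl one_ne_zero) hIn (Or.inr ENNReal.one_ne_top)
  have hfinal : 2 * ω * (1 * M) ≤ L := by
    refine le_of_tendsto hmul ?_
    refine Filter.eventually_atTop.mpr ⟨1, fun n hn => ?_⟩
    have hlt1 : f n < 1 := by
      rw [hf]
      simp only
      rw [div_lt_one (by positivity)]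
      have : (1:ℝ) ≤ (n:ℝ) := by exact_mod_cast hn
      linarith
    have hst := step2 (f n) (f n) (hfpos n) hlt1 (hfpos n)
    calc 2 * ω * (ENNReal.ofReal ((1 - f n) ^ p) *
          (∫⁻ x in Sd (f n), ENNReal.ofReal (|u x| ^ p)))
        = 2 * ω * ENNReal.ofReal ((1 - f n) ^ p) *
          (∫⁻ x in Sd (f n), ENNReal.ofReal (|u x| ^ p)) := by ring
      _ ≤ L := hst
  simpa using hfinal

theorem stmt17 (N : ℕ) (hN : 0 < N) (p : ℝ) (hp : 1 ≤ p)
    (u : EuclideanSpace ℝ (Fin N) → ℝ) (hu : Measurable u)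
    (hfin : ∫⁻ x, ENNReal.ofReal (|u x| ^ p) < ⊤) :
    2 * volume (ball (0 : EuclideanSpace ℝ (Fin N)) 1) *
        (∫⁻ x, ENNReal.ofReal (|u x| ^ p)) ≤
      (⨆ t ∈ Ioi (0:ℝ), ENNReal.ofReal (t ^ p) *
        volume {q : EuclideanSpace ℝ (Fin N) × EuclideanSpace ℝ (Fin N) |
          q.1 ≠ q.2 ∧ t ^ p * dist q.1 q.2 ^ N ≤ |u q.1 - u q.2| ^ p}) ∧
    (⨆ t ∈ Ioi (0:ℝ), ENNReal.ofReal (t ^ p) *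
        volume {q : EuclideanSpace ℝ (Fin N) × EuclideanSpace ℝ (Fin N) |
          q.1 ≠ q.2 ∧ t ^ p * dist q.1 q.2 ^ N ≤ |u q.1 - u q.2| ^ p}) ≤
      ENNReal.ofReal (2 ^ (p + 1)) * volume (ball (0 : EuclideanSpace ℝ (Fin N)) 1) *
        (∫⁻ x, ENNReal.ofReal (|u x| ^ p)) := by
  exact ⟨lower_bd N hN p hp u hu hfin, upper_bd N hN p hp u hu⟩
end
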